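/- The original Altes waveform satisfies the homogeneous functional equation for all real orders: for every real n and every ω > 0, ω^n·U_A(ω) = C(n)·U_A(ω/k^n), where C(n) = k^{nν + n²/2}·exp(2πi·n·c). -/

import Mathlib

/-- The original Altes waveform with parameters ν, c and k. -/
noncomputable def altesOrig (ν c k : ℝ) : ℝ → ℂ := fun ω =>
  (↑(k ^ (-(ν ^ 2) / 2)) : ℂ) * (↑(ω ^ ν) : ℂ) *
    Complex.exp (((-(Real.log ω) ^ 2 / (2 * Real.log k) : ℝ)) : ℂ) *
    Complex.exp (2 * Real.pi * Complex.I * c * Real.log ω / Real.log k)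

/-- The proportionality constant of the Altes functional equation. -/
noncomputable def altesC (ν c k : ℝ) : ℝ → ℂ := fun n =>
  (↑(k ^ (n * ν + n ^ 2 / 2)) : ℂ) * Complex.exp (2 * Real.pi * Complex.I * n * c)

/-- The original Altes waveform satisfies the homogeneous
functional equation for all real orders: ω^n·U_A(ω) = C(n)·U_A(ω/k^n), where
C(n) = k^{nν + n²/2}·exp(2πi·n·c). -/
theorem altesOrig_functional_equation (ν c k : ℝ) (hk : 1 < k) :
    ∀ n : ℝ, ∀ ω : ℝ, 0 < ω →
      (↑(ω ^ n) : ℂ) * altesOrig ν c k ω =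
        altesC ν c k n * altesOrig ν c k (ω / k ^ n) := by
  intro n ω hω
  have hk0 : (0:ℝ) < k := lt_trans one_pos hk
  have hlk : 0 < Real.log k := Real.log_pos hk
  have hlk0 : (Real.log k : ℂ) ≠ 0 := by exact_mod_cast ne_of_gt hlk
  have hkn : (0:ℝ) < k ^ n := Real.rpow_pos_of_pos hk0 n
  have hωd : (0:ℝ) < ω / k ^ n := div_pos hω hkn
  have hlog : Real.log (ω / k ^ n) = Real.log ω - n * Real.log k := by
    rw [Real.log_div hω.ne' hkn.ne', Real.log_rpow hk0]
  have h1 : (ω / k ^ n) ^ ν = Real.exp ((Real.log ω - n * Real.log k) * ν) := by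
    rw [Real.rpow_def_of_pos hωd, hlog]
  simp only [altesOrig, altesC, hlog, h1]
  simp only [Real.rpow_def_of_pos hk0, Real.rpow_def_of_pos hω,
    Complex.ofReal_exp, ← Complex.exp_add]
  congr 1
  push_cast [hlog]
  field_simp
  ring
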